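/- Let (X₁,ρ₁,μ₁) and (X₂,ρ₂,μ₂) be quasimetric spaces with upper doubling measures with dominating functions λ₁, λ₂, let α₁, α₂ > 0, C_K ≥ 1, C_H ≥ 0, and let K : (X₁×X₂)×(X₁×X₂) → ℂ be a measurable kernel satisfying the bi-parameter Hölder estimate with constant C_H in base-point form. Let φᵢ, θᵢ ∈ L²(μᵢ) (i = 1,2) with supports E_{φᵢ} := supp φᵢ and E_{θᵢ} := supp θᵢ satisfying: E_{φ₁} ∩ E_{θ₁} = ∅ and E_{φ₂} ∩ E_{θ₂} = ∅; for all x₁ ∈ E_{θ₁} and all y₁, z ∈ E_{φ₁} one has ρ₁(y₁,z) ≤ ρ₁(x₁,z)/C_K, and for all x₂ ∈ E_{θ₂} and all y₂, w ∈ E_{φ₂} one has ρ₂(y₂,w) ≤ ρ₂(x₂,w)/C_K; ∫ φ₁ dμ₁ = 0 and ∫ φ₂ dμ₂ = 0; and the functions (x,y) ↦ K(x,y)φ₁(y₁)φ₂(y₂)θ₁(x₁)θ₂(x₂), together with the corresponding expressions in which y₁ is replaced by a fixed z ∈ E_{φ₁} and/or y₂ by a fixed w ∈ E_{φ₂}, are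 absolutely integrable. Then for every z ∈ E_{φ₁} and every w ∈ E_{φ₂}, setting d₁ := sup_{y₁ ∈ E_{φ₁}} ρ₁(y₁,z) and d₂ := sup_{y₂ ∈ E_{φ₂}} ρ₂(y₂,w), one has |∬ K(x,y) φ₁(y₁)φ₂(y₂)θ₁(x₁)θ₂(x₂) d(μ₁×μ₂)(x) d(μ₁×μ₂)(y)| ≤ C_H · d₁^{α₁} d₂^{α₂} · ‖φ₁‖_{L²(μ₁)}‖φ₂‖_{L²(μ₂)} μ₁(E_{φ₁})^{1/2} μ₂(E_{φ₂})^{1/2} · ∫_{E_{θ₁}} ρ₁(x₁,z)^{−α₁} λ₁(z,ρ₁(x₁,z))^{−1} |θ₁(x₁)| dμ₁(x₁) · ∫_{E_{θ₂}} ρ₂(x₂,w)^{−α₂} λ₂(w,ρ₂(x₂,w))^{−1} |θ₂(x₂)| dμ₂(x₂). -/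

import Mathlib

open MeasureTheory

open MeasureTheory Set Function
open scoped ENNReal NNReal

section Aux

variable {α β : Type*} [MeasurableSpace α] [MeasurableSpace β]

lemma aux_sigmaFinite (μ : Measure α) (ρ : α → α → ℝ) (lam : α → ℝ → ℝ)
    (h : ∀ x r, 0 < r → μ {y | ρ x y < r} ≤ ENNReal.ofReal (lam x r)) :
    SigmaFinite μ := by
  rcases isEmpty_or_nonempty α with hα | ⟨⟨x₀⟩⟩
  · exact ⟨⟨⟨fun _ => Set.univ, fun _ => trivial,
      fun _ => by
        have : (Set.univ : Set α) = ∅ := Set.eq_empty_of_isEmpty _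
        rw [this]; simp, Set.iUnion_const _⟩⟩⟩
  · refine ⟨⟨⟨fun n => {y | ρ x₀ y < (n : ℝ) + 1}, fun _ => trivial,
      fun n => lt_of_le_of_lt (h x₀ ((n : ℝ) + 1) (by positivity)) ENNReal.ofReal_lt_top, ?_⟩⟩⟩
    ext y
    simp only [Set.mem_iUnion, Set.mem_setOf_eq, Set.mem_univ, iff_true]
    obtain ⟨n, hn⟩ := exists_nat_gt (ρ x₀ y)
    exact ⟨n, by linarith⟩

lemma aux_lintegral_zero_of_le_mul {μ : Measure α} (h u : α → ℝ≥0∞) (c : ℝ≥0∞)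
    (hm : Measurable h) (hc : c ≠ ∞) (hle : ∀ a, h a ≤ u a * c)
    (hu : ∫⁻ a, u a ∂μ = 0) : ∫⁻ a, h a ∂μ = 0 := by
  rcases eq_or_ne c 0 with rfl | hc0
  · have hz : ∀ a, h a = 0 := fun a => le_antisymm (by simpa using hle a) (zero_le)
    simp only [hz, lintegral_zero]
  · have key : ∀ ε : ℝ≥0∞, ε ≠ 0 → ε ≠ ∞ → μ {a | ε ≤ h a} = 0 := by
      intro ε hε hεtop
      have hr0 : ε / c ≠ 0 := by
        simp only [ne_eq, ENNReal.div_eq_zero_iff, not_or]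
        exact ⟨hε, hc⟩
      have hAm : MeasurableSet {a | ε ≤ h a} := hm measurableSet_Ici
      have hind : ∀ a, ({a | ε ≤ h a}).indicator (fun _ => ε / c) a ≤ u a := by
        intro a
        by_cases ha : a ∈ {a | ε ≤ h a}
        · rw [Set.indicator_of_mem ha]
          have h1 : ε ≤ u a * c := le_trans ha (hle a)
          exact (ENNReal.div_le_iff_le_mul (Or.inl hc0) (Or.inl hc)).2 h1
        · rw [Set.indicator_of_notMem ha]; exact zero_le
      have : (ε / c) * μ {a | ε ≤ h a} ≤ 0 := by
        rw [← hu, ← lintegral_indicator_const hAm]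
        exact lintegral_mono hind
      have := le_antisymm this (zero_le)
      rcases (mul_eq_zero.1 this) with h' | h'
      · exact absurd h' hr0
      · exact h'
    have hae : μ {a | h a ≠ 0} = 0 := by
      have hsub : {a | h a ≠ 0} ⊆ ⋃ n : ℕ, {a | ((n : ℝ≥0∞) + 1)⁻¹ ≤ h a} := by
        intro a ha
        obtain ⟨n, hn⟩ := ENNReal.exists_inv_nat_lt ha
        refine Set.mem_iUnion.2 ⟨n, ?_⟩
        have : ((n : ℝ≥0∞) + 1)⁻¹ ≤ ((n : ℝ≥0∞))⁻¹ :=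
          ENNReal.inv_le_inv.2 (le_add_of_nonneg_right (zero_le))
        exact le_trans this hn.le
      refine measure_mono_null hsub (measure_iUnion_null fun n => key _ ?_ ?_)
      · simp only [ne_eq, ENNReal.inv_eq_zero]
        exact (ENNReal.add_lt_top.2 ⟨ENNReal.natCast_lt_top n, ENNReal.one_lt_top⟩).ne
      · simp only [ne_eq, ENNReal.inv_eq_top]
        intro h
        exact one_ne_zero (add_eq_zero.mp h).2
    calc ∫⁻ a, h a ∂μ = ∫⁻ a, 0 ∂μ := lintegral_congr_ae (by
          rw [Filter.EventuallyEq, ae_iff]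
          simpa using hae)
      _ = 0 := lintegral_zero

variable (μ : Measure α) (ν : Measure β) [SigmaFinite μ] [SigmaFinite ν]

lemma aux_coord21_zero (u : α → ℝ≥0∞) (v : (α × β) × β → ℝ≥0∞)
    (hu : ∫⁻ a, u a ∂μ = 0) (hv : ∀ p, v p ≠ ∞) :
    ∫⁻ q, u q.2.1 * v (q.1, q.2.2) ∂((μ.prod ν).prod (μ.prod ν)) = 0 := by
  obtain ⟨g, hgm, hgle, hgeq⟩ := exists_measurable_le_lintegral_eq
    ((μ.prod ν).prod (μ.prod ν)) (fun q => u q.2.1 * v (q.1, q.2.2))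
  rw [hgeq, lintegral_prod _ hgm.aemeasurable]
  have inner : ∀ y, ∫⁻ x, g (y, x) ∂(μ.prod ν) = 0 := by
    intro y
    rw [lintegral_prod_symm (fun x => g (y, x)) ((show Measurable (fun x => g (y, x)) from hgm.comp measurable_prodMk_left).aemeasurable)]
    have inner2 : ∀ b, ∫⁻ a, g (y, (a, b)) ∂μ = 0 := by
      intro b
      refine aux_lintegral_zero_of_le_mul _ u (v (y, b)) ?_ (hv _) ?_ hu
      · exact hgm.comp (measurable_const.prodMk (measurable_id.prodMk measurable_const))
      · exact fun a => hgle (y, (a, b))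
    simp only [inner2, lintegral_zero]
  simp only [inner, lintegral_zero]

lemma aux_coord22_zero (u : β → ℝ≥0∞) (v : (α × β) × α → ℝ≥0∞)
    (hu : ∫⁻ b, u b ∂ν = 0) (hv : ∀ p, v p ≠ ∞) :
    ∫⁻ q, u q.2.2 * v (q.1, q.2.1) ∂((μ.prod ν).prod (μ.prod ν)) = 0 := by
  obtain ⟨g, hgm, hgle, hgeq⟩ := exists_measurable_le_lintegral_eq
    ((μ.prod ν).prod (μ.prod ν)) (fun q => u q.2.2 * v (q.1, q.2.1))
  rw [hgeq, lintegral_prod _ hgm.aemeasurable]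
  have inner : ∀ y, ∫⁻ x, g (y, x) ∂(μ.prod ν) = 0 := by
    intro y
    rw [lintegral_prod (fun x => g (y, x)) ((show Measurable (fun x => g (y, x)) from hgm.comp measurable_prodMk_left).aemeasurable)]
    have inner2 : ∀ a, ∫⁻ b, g (y, (a, b)) ∂ν = 0 := by
      intro a
      refine aux_lintegral_zero_of_le_mul _ u (v (y, a)) ?_ (hv _) ?_ hu
      · exact hgm.comp (measurable_const.prodMk (measurable_const.prodMk measurable_id))
      · exact fun b => hgle (y, (a, b))
    simp only [inner2, lintegral_zero]
  simp only [inner, lintegral_zero]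

lemma aux_prod4_le (F₁ : α → ℝ≥0∞) (F₂ : β → ℝ≥0∞) (F₃ : α → ℝ≥0∞) (F₄ : β → ℝ≥0∞)
    (h₁ : AEMeasurable F₁ μ) (h₂ : AEMeasurable F₂ ν)
    (h₁fin : ∀ a, F₁ a ≠ ∞) (h₂fin : ∀ b, F₂ b ≠ ∞) (h₃fin : ∀ a, F₃ a ≠ ∞)
    (h₃int : ∫⁻ a, F₃ a ∂μ ≠ ∞) (h₄int : ∫⁻ b, F₄ b ∂ν ≠ ∞) :
    ∫⁻ q, (F₁ q.1.1 * F₂ q.1.2) * (F₃ q.2.1 * F₄ q.2.2) ∂((μ.prod ν).prod (μ.prod ν))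
      ≤ (∫⁻ a, F₁ a ∂μ) * (∫⁻ b, F₂ b ∂ν) * ((∫⁻ a, F₃ a ∂μ) * (∫⁻ b, F₄ b ∂ν)) := by
  obtain ⟨g, hgm, hgle, hgeq⟩ := exists_measurable_le_lintegral_eq
    ((μ.prod ν).prod (μ.prod ν)) (fun q => (F₁ q.1.1 * F₂ q.1.2) * (F₃ q.2.1 * F₄ q.2.2))
  rw [hgeq, lintegral_prod _ hgm.aemeasurable]
  calc ∫⁻ y, ∫⁻ x, g (y, x) ∂(μ.prod ν) ∂(μ.prod ν)
      ≤ ∫⁻ y, (F₁ y.1 * F₂ y.2) * ((∫⁻ a, F₃ a ∂μ) * (∫⁻ b, F₄ b ∂ν)) ∂(μ.prod ν) := by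
        refine lintegral_mono fun y => ?_
        rw [lintegral_prod (fun x => g (y, x)) ((show Measurable (fun x => g (y, x)) from hgm.comp measurable_prodMk_left).aemeasurable)]
        calc ∫⁻ a, ∫⁻ b, g (y, (a, b)) ∂ν ∂μ
            ≤ ∫⁻ a, (F₁ y.1 * F₂ y.2) * (F₃ a * (∫⁻ b, F₄ b ∂ν)) ∂μ := by
              refine lintegral_mono fun a => ?_
              calc ∫⁻ b, g (y, (a, b)) ∂ν
                  ≤ ∫⁻ b, (F₁ y.1 * F₂ y.2 * F₃ a) * F₄ b ∂ν := by
                    refine lintegral_mono fun b => ?_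
                    refine le_trans (hgle (y, (a, b))) (le_of_eq ?_)
                    ring
                _ = (F₁ y.1 * F₂ y.2 * F₃ a) * ∫⁻ b, F₄ b ∂ν :=
                    lintegral_const_mul' _ _ (by
                      exact ENNReal.mul_ne_top (ENNReal.mul_ne_top (h₁fin _) (h₂fin _)) (h₃fin _))
                _ = (F₁ y.1 * F₂ y.2) * (F₃ a * (∫⁻ b, F₄ b ∂ν)) := by ring
          _ = (F₁ y.1 * F₂ y.2) * ∫⁻ a, F₃ a * (∫⁻ b, F₄ b ∂ν) ∂μ :=
              lintegral_const_mul' _ _ (ENNReal.mul_ne_top (h₁fin _) (h₂fin _))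
          _ = (F₁ y.1 * F₂ y.2) * ((∫⁻ a, F₃ a ∂μ) * (∫⁻ b, F₄ b ∂ν)) := by
              rw [lintegral_mul_const' _ _ h₄int]
    _ = (∫⁻ y, F₁ y.1 * F₂ y.2 ∂(μ.prod ν)) * ((∫⁻ a, F₃ a ∂μ) * (∫⁻ b, F₄ b ∂ν)) :=
        lintegral_mul_const' _ _ (ENNReal.mul_ne_top h₃int h₄int)
    _ = (∫⁻ a, F₁ a ∂μ) * (∫⁻ b, F₂ b ∂ν) * ((∫⁻ a, F₃ a ∂μ) * (∫⁻ b, F₄ b ∂ν)) := by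
        rw [lintegral_prod_mul h₁ h₂]

lemma aux_cauchy_schwarz (μ : Measure α) {E : Type*} [NormedAddCommGroup E] (f : α → E)
    (hf : AEStronglyMeasurable f μ) :
    ∫⁻ a, (‖f a‖₊ : ℝ≥0∞) ∂μ
      ≤ eLpNorm f 2 μ * (μ (Function.support f)) ^ ((1 : ℝ) / 2) := by
  have hsupp : Function.support (fun a => (‖f a‖₊ : ℝ≥0∞)) ⊆ Function.support f := by
    intro a ha
    simp only [Function.mem_support, ne_eq] at ha ⊢
    intro h0
    apply ha
    simp [h0]
  rw [← setLIntegral_eq_of_support_subset hsupp]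
  have hCS := ENNReal.lintegral_mul_le_Lp_mul_Lq (μ.restrict (Function.support f))
    (p := 2) (q := 2) Real.HolderConjugate.two_two
    (f := fun a => (‖f a‖₊ : ℝ≥0∞)) (g := fun _ => 1)
    hf.restrict.enorm aemeasurable_const
  simp only [Pi.mul_apply, mul_one, ENNReal.one_rpow, lintegral_const, one_mul,
    Measure.restrict_apply_univ] at hCS
  refine le_trans hCS (mul_le_mul' ?_ le_rfl)
  have h3 : eLpNorm f 2 μ = (∫⁻ a, (‖f a‖₊ : ℝ≥0∞) ^ (2 : ℝ) ∂μ) ^ (1 / (2 : ℝ)) := by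
    rw [eLpNorm_eq_lintegral_rpow_enorm_toReal (by norm_num) (by norm_num)]
    norm_num
    rfl
  rw [h3]
  exact ENNReal.rpow_le_rpow (lintegral_mono' Measure.restrict_le_self le_rfl) (by norm_num)

end Aux

/-- bi-parameter kernel estimate with two cancellative factors
(Lemma 2.4 of the paper). -/
theorem biparameter_kernel_estimate
    {X₁ : Type*} {X₂ : Type*} [MeasurableSpace X₁] [MeasurableSpace X₂]
    (A₀ : ℝ) (hA₀ : 1 ≤ A₀)
    (ρ₁ : X₁ → X₁ → ℝ)
    (hρ₁_nonneg : ∀ x y, 0 ≤ ρ₁ x y)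
    (hρ₁_eq : ∀ x y, ρ₁ x y = 0 ↔ x = y)
    (hρ₁_symm : ∀ x y, ρ₁ x y = ρ₁ y x)
    (hρ₁_tri : ∀ x y z, ρ₁ x z ≤ A₀ * (ρ₁ x y + ρ₁ y z))
    (ρ₂ : X₂ → X₂ → ℝ)
    (hρ₂_nonneg : ∀ x y, 0 ≤ ρ₂ x y)
    (hρ₂_eq : ∀ x y, ρ₂ x y = 0 ↔ x = y)
    (hρ₂_symm : ∀ x y, ρ₂ x y = ρ₂ y x)
    (hρ₂_tri : ∀ x y z, ρ₂ x z ≤ A₀ * (ρ₂ x y + ρ₂ y z))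
    (μ₁ : Measure X₁) (μ₂ : Measure X₂)
    (lam₁ : X₁ → ℝ → ℝ) (Clam₁ : ℝ) (hClam₁ : 1 ≤ Clam₁)
    (hlam₁_pos : ∀ x r, 0 < r → 0 < lam₁ x r)
    (hlam₁_mono : ∀ x r s, 0 < r → r ≤ s → lam₁ x r ≤ lam₁ x s)
    (hlam₁_dbl : ∀ x r, 0 < r → lam₁ x (2 * r) ≤ Clam₁ * lam₁ x r)
    (hμ₁_lam : ∀ x r, 0 < r → μ₁ {y | ρ₁ x y < r} ≤ ENNReal.ofReal (lam₁ x r))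
    (lam₂ : X₂ → ℝ → ℝ) (Clam₂ : ℝ) (hClam₂ : 1 ≤ Clam₂)
    (hlam₂_pos : ∀ x r, 0 < r → 0 < lam₂ x r)
    (hlam₂_mono : ∀ x r s, 0 < r → r ≤ s → lam₂ x r ≤ lam₂ x s)
    (hlam₂_dbl : ∀ x r, 0 < r → lam₂ x (2 * r) ≤ Clam₂ * lam₂ x r)
    (hμ₂_lam : ∀ x r, 0 < r → μ₂ {y | ρ₂ x y < r} ≤ ENNReal.ofReal (lam₂ x r))
    (α₁ α₂ : ℝ) (hα₁ : 0 < α₁) (hα₂ : 0 < α₂)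
    (C_K : ℝ) (hC_K : 1 ≤ C_K) (C_H : ℝ) (hC_H : 0 ≤ C_H)
    (K : X₁ × X₂ → X₁ × X₂ → ℂ)
    (hK_meas : Measurable (Function.uncurry K))
    (hK_Holder : ∀ x₁ x₂ y₁ y₂ z w,
        ρ₁ y₁ z ≤ ρ₁ x₁ z / C_K → ρ₂ y₂ w ≤ ρ₂ x₂ w / C_K →
        ‖K (x₁, x₂) (y₁, y₂) - K (x₁, x₂) (y₁, w) - K (x₁, x₂) (z, y₂) + K (x₁, x₂) (z, w)‖
          ≤ C_H * (ρ₁ y₁ z ^ α₁ / (ρ₁ x₁ z ^ α₁ * lam₁ z (ρ₁ x₁ z)))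
              * (ρ₂ y₂ w ^ α₂ / (ρ₂ x₂ w ^ α₂ * lam₂ w (ρ₂ x₂ w))))
    (φ₁ θ₁ : X₁ → ℂ) (φ₂ θ₂ : X₂ → ℂ)
    (hφ₁ : MemLp φ₁ 2 μ₁) (hφ₂ : MemLp φ₂ 2 μ₂)
    (hθ₁ : MemLp θ₁ 2 μ₁) (hθ₂ : MemLp θ₂ 2 μ₂)
    (hdisj₁ : Function.support φ₁ ∩ Function.support θ₁ = ∅)
    (hdisj₂ : Function.support φ₂ ∩ Function.support θ₂ = ∅)
    (hsep₁ : ∀ x₁ ∈ Function.support θ₁, ∀ y₁ ∈ Function.support φ₁,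
        ∀ z ∈ Function.support φ₁, ρ₁ y₁ z ≤ ρ₁ x₁ z / C_K)
    (hsep₂ : ∀ x₂ ∈ Function.support θ₂, ∀ y₂ ∈ Function.support φ₂,
        ∀ w ∈ Function.support φ₂, ρ₂ y₂ w ≤ ρ₂ x₂ w / C_K)
    (hcancel₁ : (∫ y, φ₁ y ∂μ₁) = 0)
    (hcancel₂ : (∫ y, φ₂ y ∂μ₂) = 0) :
    ∀ z ∈ Function.support φ₁, ∀ w ∈ Function.support φ₂,
    ∀ d₁ d₂ : ℝ,
      IsLUB ((fun y₁ => ρ₁ y₁ z) '' Function.support φ₁) d₁ →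
      IsLUB ((fun y₂ => ρ₂ y₂ w) '' Function.support φ₂) d₂ →
      Integrable (fun q : (X₁ × X₂) × (X₁ × X₂) =>
          K q.2 q.1 * φ₁ q.1.1 * φ₂ q.1.2 * θ₁ q.2.1 * θ₂ q.2.2)
        ((μ₁.prod μ₂).prod (μ₁.prod μ₂)) →
      Integrable (fun q : (X₁ × X₂) × (X₁ × X₂) =>
          K q.2 (z, q.1.2) * φ₁ q.1.1 * φ₂ q.1.2 * θ₁ q.2.1 * θ₂ q.2.2)
        ((μ₁.prod μ₂).prod (μ₁.prod μ₂)) →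
      Integrable (fun q : (X₁ × X₂) × (X₁ × X₂) =>
          K q.2 (q.1.1, w) * φ₁ q.1.1 * φ₂ q.1.2 * θ₁ q.2.1 * θ₂ q.2.2)
        ((μ₁.prod μ₂).prod (μ₁.prod μ₂)) →
      Integrable (fun q : (X₁ × X₂) × (X₁ × X₂) =>
          K q.2 (z, w) * φ₁ q.1.1 * φ₂ q.1.2 * θ₁ q.2.1 * θ₂ q.2.2)
        ((μ₁.prod μ₂).prod (μ₁.prod μ₂)) →
      ENNReal.ofReal ‖∫ y : X₁ × X₂, (∫ x : X₁ × X₂,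
            K x y * φ₁ y.1 * φ₂ y.2 * θ₁ x.1 * θ₂ x.2 ∂(μ₁.prod μ₂)) ∂(μ₁.prod μ₂)‖
        ≤ ENNReal.ofReal (C_H * d₁ ^ α₁ * d₂ ^ α₂)
            * eLpNorm φ₁ 2 μ₁ * eLpNorm φ₂ 2 μ₂
            * μ₁ (Function.support φ₁) ^ ((1 : ℝ) / 2)
            * μ₂ (Function.support φ₂) ^ ((1 : ℝ) / 2)
            * (∫⁻ x₁ in Function.support θ₁,
                ENNReal.ofReal (ρ₁ x₁ z ^ (-α₁) * (lam₁ z (ρ₁ x₁ z))⁻¹ * ‖θ₁ x₁‖) ∂μ₁)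
            * (∫⁻ x₂ in Function.support θ₂,
                ENNReal.ofReal (ρ₂ x₂ w ^ (-α₂) * (lam₂ w (ρ₂ x₂ w))⁻¹ * ‖θ₂ x₂‖) ∂μ₂) := by
  
  intro z hz w hw d₁ d₂ hd₁ hd₂ hInt hIntz hIntw hIntzw
  haveI : SigmaFinite μ₁ := aux_sigmaFinite μ₁ ρ₁ lam₁ hμ₁_lam
  haveI : SigmaFinite μ₂ := aux_sigmaFinite μ₂ ρ₂ lam₂ hμ₂_lam
  have hd₁0 : 0 ≤ d₁ := by
    have h := hd₁.1 (Set.mem_image_of_mem _ hz)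
    simpa [(hρ₁_eq z z).mpr rfl] using h
  have hd₂0 : 0 ≤ d₂ := by
    have h := hd₂.1 (Set.mem_image_of_mem _ hw)
    simpa [(hρ₂_eq w w).mpr rfl] using h
  -- degenerate support cases
  by_cases hsupp₁ : μ₁ (Function.support φ₁) = 0
  · have hae : (fun y : X₁ × X₂ => ∫ x : X₁ × X₂,
        K x y * φ₁ y.1 * φ₂ y.2 * θ₁ x.1 * θ₂ x.2 ∂(μ₁.prod μ₂)) =ᵐ[μ₁.prod μ₂] 0 := by
      rw [Filter.EventuallyEq, ae_iff]
      refine measure_mono_null (fun y hy => ?_)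
        (?_ : (μ₁.prod μ₂) ((toMeasurable μ₁ (Function.support φ₁)) ×ˢ (Set.univ : Set X₂)) = 0)
      · simp only [Set.mem_setOf_eq, Pi.zero_apply] at hy
        by_contra hyE
        apply hy
        have hy1 : y.1 ∉ toMeasurable μ₁ (Function.support φ₁) := fun h => hyE ⟨h, Set.mem_univ _⟩
        have hy0 : φ₁ y.1 = 0 := by
          by_contra hne
          exact hy1 (subset_toMeasurable _ _ hne)
        have hzero : ∀ x : X₁ × X₂, K x y * φ₁ y.1 * φ₂ y.2 * θ₁ x.1 * θ₂ x.2 = 0 := by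
          intro x; rw [hy0]; ring
        simp only [hzero, integral_zero]
      · rw [Measure.prod_prod, measure_toMeasurable, hsupp₁, zero_mul]
    rw [integral_congr_ae hae]
    simp only [Pi.zero_apply, integral_zero, norm_zero, ENNReal.ofReal_zero]
    exact zero_le
  by_cases hsupp₂ : μ₂ (Function.support φ₂) = 0
  · have hae : (fun y : X₁ × X₂ => ∫ x : X₁ × X₂,
        K x y * φ₁ y.1 * φ₂ y.2 * θ₁ x.1 * θ₂ x.2 ∂(μ₁.prod μ₂)) =ᵐ[μ₁.prod μ₂] 0 := by
      rw [Filter.EventuallyEq, ae_iff]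
      refine measure_mono_null (fun y hy => ?_)
        (?_ : (μ₁.prod μ₂) ((Set.univ : Set X₁) ×ˢ (toMeasurable μ₂ (Function.support φ₂))) = 0)
      · simp only [Set.mem_setOf_eq, Pi.zero_apply] at hy
        by_contra hyE
        apply hy
        have hy2 : y.2 ∉ toMeasurable μ₂ (Function.support φ₂) := fun h => hyE ⟨Set.mem_univ _, h⟩
        have hy0 : φ₂ y.2 = 0 := by
          by_contra hne
          exact hy2 (subset_toMeasurable _ _ hne)
        have hzero : ∀ x : X₁ × X₂, K x y * φ₁ y.1 * φ₂ y.2 * θ₁ x.1 * θ₂ x.2 = 0 := by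
          intro x; rw [hy0]; ring
        simp only [hzero, integral_zero]
      · rw [Measure.prod_prod, measure_toMeasurable, hsupp₂, mul_zero]
    rw [integral_congr_ae hae]
    simp only [Pi.zero_apply, integral_zero, norm_zero, ENNReal.ofReal_zero]
    exact zero_le
  -- replace the set-lintegrals in the goal by full lintegrals
  have hW₁eq : (∫⁻ x₁ in Function.support θ₁,
        ENNReal.ofReal (ρ₁ x₁ z ^ (-α₁) * (lam₁ z (ρ₁ x₁ z))⁻¹ * ‖θ₁ x₁‖) ∂μ₁)
      = ∫⁻ x₁, ENNReal.ofReal (ρ₁ x₁ z ^ (-α₁) * (lam₁ z (ρ₁ x₁ z))⁻¹ * ‖θ₁ x₁‖) ∂μ₁ := by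
    refine setLIntegral_eq_of_support_subset fun x hx => ?_
    simp only [Function.mem_support, ne_eq] at hx ⊢
    intro h0
    apply hx
    rw [h0]
    simp
  have hW₂eq : (∫⁻ x₂ in Function.support θ₂,
        ENNReal.ofReal (ρ₂ x₂ w ^ (-α₂) * (lam₂ w (ρ₂ x₂ w))⁻¹ * ‖θ₂ x₂‖) ∂μ₂)
      = ∫⁻ x₂, ENNReal.ofReal (ρ₂ x₂ w ^ (-α₂) * (lam₂ w (ρ₂ x₂ w))⁻¹ * ‖θ₂ x₂‖) ∂μ₂ := by
    refine setLIntegral_eq_of_support_subset fun x hx => ?_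
    simp only [Function.mem_support, ne_eq] at hx ⊢
    intro h0
    apply hx
    rw [h0]
    simp
  rw [hW₁eq, hW₂eq]
  -- iterated integral = product integral
  have hQeq : (∫ y : X₁ × X₂, (∫ x : X₁ × X₂,
        K x y * φ₁ y.1 * φ₂ y.2 * θ₁ x.1 * θ₂ x.2 ∂(μ₁.prod μ₂)) ∂(μ₁.prod μ₂))
      = ∫ q : (X₁ × X₂) × (X₁ × X₂),
          K q.2 q.1 * φ₁ q.1.1 * φ₂ q.1.2 * θ₁ q.2.1 * θ₂ q.2.2
          ∂((μ₁.prod μ₂).prod (μ₁.prod μ₂)) := (integral_prod _ hInt).symm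
  -- the three vanishing integrals
  have hz0 : (∫ q : (X₁ × X₂) × (X₁ × X₂),
        K q.2 (z, q.1.2) * φ₁ q.1.1 * φ₂ q.1.2 * θ₁ q.2.1 * θ₂ q.2.2
        ∂((μ₁.prod μ₂).prod (μ₁.prod μ₂))) = 0 := by
    calc (∫ q : (X₁ × X₂) × (X₁ × X₂),
          K q.2 (z, q.1.2) * φ₁ q.1.1 * φ₂ q.1.2 * θ₁ q.2.1 * θ₂ q.2.2
          ∂((μ₁.prod μ₂).prod (μ₁.prod μ₂)))
        = ∫ y : X₁ × X₂, (∫ x : X₁ × X₂,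
            K x (z, y.2) * φ₁ y.1 * φ₂ y.2 * θ₁ x.1 * θ₂ x.2 ∂(μ₁.prod μ₂)) ∂(μ₁.prod μ₂) :=
          integral_prod _ hIntz
      _ = ∫ y : X₁ × X₂, φ₁ y.1 * ((fun t => φ₂ t *
            ∫ x : X₁ × X₂, K x (z, t) * θ₁ x.1 * θ₂ x.2 ∂(μ₁.prod μ₂)) y.2) ∂(μ₁.prod μ₂) := by
          refine integral_congr_ae (Filter.Eventually.of_forall fun y => ?_)
          show (∫ x : X₁ × X₂, K x (z, y.2) * φ₁ y.1 * φ₂ y.2 * θ₁ x.1 * θ₂ x.2 ∂(μ₁.prod μ₂))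
            = φ₁ y.1 * (φ₂ y.2 * ∫ x : X₁ × X₂, K x (z, y.2) * θ₁ x.1 * θ₂ x.2 ∂(μ₁.prod μ₂))
          rw [← integral_const_mul, ← integral_const_mul]
          exact integral_congr_ae (Filter.Eventually.of_forall fun x => by ring)
      _ = (∫ s, φ₁ s ∂μ₁) * ∫ t, φ₂ t *
            (∫ x : X₁ × X₂, K x (z, t) * θ₁ x.1 * θ₂ x.2 ∂(μ₁.prod μ₂)) ∂μ₂ :=
          integral_prod_mul (μ := μ₁) (ν := μ₂) φ₁
            (fun t => φ₂ t * ∫ x : X₁ × X₂, K x (z, t) * θ₁ x.1 * θ₂ x.2 ∂(μ₁.prod μ₂))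
      _ = 0 := by rw [hcancel₁, zero_mul]
  have hw0 : (∫ q : (X₁ × X₂) × (X₁ × X₂),
        K q.2 (q.1.1, w) * φ₁ q.1.1 * φ₂ q.1.2 * θ₁ q.2.1 * θ₂ q.2.2
        ∂((μ₁.prod μ₂).prod (μ₁.prod μ₂))) = 0 := by
    calc (∫ q : (X₁ × X₂) × (X₁ × X₂),
          K q.2 (q.1.1, w) * φ₁ q.1.1 * φ₂ q.1.2 * θ₁ q.2.1 * θ₂ q.2.2
          ∂((μ₁.prod μ₂).prod (μ₁.prod μ₂)))
        = ∫ y : X₁ × X₂, (∫ x : X₁ × X₂,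
            K x (y.1, w) * φ₁ y.1 * φ₂ y.2 * θ₁ x.1 * θ₂ x.2 ∂(μ₁.prod μ₂)) ∂(μ₁.prod μ₂) :=
          integral_prod _ hIntw
      _ = ∫ y : X₁ × X₂, ((fun s => φ₁ s *
            ∫ x : X₁ × X₂, K x (s, w) * θ₁ x.1 * θ₂ x.2 ∂(μ₁.prod μ₂)) y.1) * φ₂ y.2 ∂(μ₁.prod μ₂) := by
          refine integral_congr_ae (Filter.Eventually.of_forall fun y => ?_)
          show (∫ x : X₁ × X₂, K x (y.1, w) * φ₁ y.1 * φ₂ y.2 * θ₁ x.1 * θ₂ x.2 ∂(μ₁.prod μ₂))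
            = (φ₁ y.1 * ∫ x : X₁ × X₂, K x (y.1, w) * θ₁ x.1 * θ₂ x.2 ∂(μ₁.prod μ₂)) * φ₂ y.2
          rw [show (φ₁ y.1 * ∫ x : X₁ × X₂, K x (y.1, w) * θ₁ x.1 * θ₂ x.2 ∂(μ₁.prod μ₂)) * φ₂ y.2
              = φ₁ y.1 * (φ₂ y.2 * ∫ x : X₁ × X₂, K x (y.1, w) * θ₁ x.1 * θ₂ x.2 ∂(μ₁.prod μ₂))
              from by ring]
          rw [← integral_const_mul, ← integral_const_mul]
          exact integral_congr_ae (Filter.Eventually.of_forall fun x => by ring)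
      _ = (∫ s, φ₁ s * (∫ x : X₁ × X₂, K x (s, w) * θ₁ x.1 * θ₂ x.2 ∂(μ₁.prod μ₂)) ∂μ₁)
            * ∫ t, φ₂ t ∂μ₂ :=
          integral_prod_mul (μ := μ₁) (ν := μ₂)
            (fun s => φ₁ s * ∫ x : X₁ × X₂, K x (s, w) * θ₁ x.1 * θ₂ x.2 ∂(μ₁.prod μ₂)) φ₂
      _ = 0 := by rw [hcancel₂, mul_zero]
  have hzw0 : (∫ q : (X₁ × X₂) × (X₁ × X₂),
        K q.2 (z, w) * φ₁ q.1.1 * φ₂ q.1.2 * θ₁ q.2.1 * θ₂ q.2.2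
        ∂((μ₁.prod μ₂).prod (μ₁.prod μ₂))) = 0 := by
    calc (∫ q : (X₁ × X₂) × (X₁ × X₂),
          K q.2 (z, w) * φ₁ q.1.1 * φ₂ q.1.2 * θ₁ q.2.1 * θ₂ q.2.2
          ∂((μ₁.prod μ₂).prod (μ₁.prod μ₂)))
        = ∫ y : X₁ × X₂, (∫ x : X₁ × X₂,
            K x (z, w) * φ₁ y.1 * φ₂ y.2 * θ₁ x.1 * θ₂ x.2 ∂(μ₁.prod μ₂)) ∂(μ₁.prod μ₂) :=
          integral_prod _ hIntzw
      _ = ∫ y : X₁ × X₂, φ₁ y.1 * ((fun t => φ₂ t *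
            ∫ x : X₁ × X₂, K x (z, w) * θ₁ x.1 * θ₂ x.2 ∂(μ₁.prod μ₂)) y.2) ∂(μ₁.prod μ₂) := by
          refine integral_congr_ae (Filter.Eventually.of_forall fun y => ?_)
          show (∫ x : X₁ × X₂, K x (z, w) * φ₁ y.1 * φ₂ y.2 * θ₁ x.1 * θ₂ x.2 ∂(μ₁.prod μ₂))
            = φ₁ y.1 * (φ₂ y.2 * ∫ x : X₁ × X₂, K x (z, w) * θ₁ x.1 * θ₂ x.2 ∂(μ₁.prod μ₂))
          rw [← integral_const_mul, ← integral_const_mul]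
          exact integral_congr_ae (Filter.Eventually.of_forall fun x => by ring)
      _ = (∫ s, φ₁ s ∂μ₁) * ∫ t, φ₂ t *
            (∫ x : X₁ × X₂, K x (z, w) * θ₁ x.1 * θ₂ x.2 ∂(μ₁.prod μ₂)) ∂μ₂ :=
          integral_prod_mul (μ := μ₁) (ν := μ₂) φ₁
            (fun t => φ₂ t * ∫ x : X₁ × X₂, K x (z, w) * θ₁ x.1 * θ₂ x.2 ∂(μ₁.prod μ₂))
      _ = 0 := by rw [hcancel₁, zero_mul]
  -- pass to the cancellative combination
  have hsplit : (∫ q : (X₁ × X₂) × (X₁ × X₂),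
        (K q.2 q.1 - K q.2 (q.1.1, w) - K q.2 (z, q.1.2) + K q.2 (z, w))
          * (φ₁ q.1.1 * φ₂ q.1.2 * θ₁ q.2.1 * θ₂ q.2.2)
        ∂((μ₁.prod μ₂).prod (μ₁.prod μ₂)))
      = ∫ q : (X₁ × X₂) × (X₁ × X₂),
          K q.2 q.1 * φ₁ q.1.1 * φ₂ q.1.2 * θ₁ q.2.1 * θ₂ q.2.2
          ∂((μ₁.prod μ₂).prod (μ₁.prod μ₂)) := by
    have e1 : ∀ q : (X₁ × X₂) × (X₁ × X₂),
        (K q.2 q.1 - K q.2 (q.1.1, w) - K q.2 (z, q.1.2) + K q.2 (z, w))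
          * (φ₁ q.1.1 * φ₂ q.1.2 * θ₁ q.2.1 * θ₂ q.2.2)
        = (K q.2 q.1 * φ₁ q.1.1 * φ₂ q.1.2 * θ₁ q.2.1 * θ₂ q.2.2
            - K q.2 (q.1.1, w) * φ₁ q.1.1 * φ₂ q.1.2 * θ₁ q.2.1 * θ₂ q.2.2
            - K q.2 (z, q.1.2) * φ₁ q.1.1 * φ₂ q.1.2 * θ₁ q.2.1 * θ₂ q.2.2)
            + K q.2 (z, w) * φ₁ q.1.1 * φ₂ q.1.2 * θ₁ q.2.1 * θ₂ q.2.2 := fun q => by ring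
    have hi1 : Integrable (fun q : (X₁ × X₂) × (X₁ × X₂) =>
        K q.2 q.1 * φ₁ q.1.1 * φ₂ q.1.2 * θ₁ q.2.1 * θ₂ q.2.2
          - K q.2 (q.1.1, w) * φ₁ q.1.1 * φ₂ q.1.2 * θ₁ q.2.1 * θ₂ q.2.2)
        ((μ₁.prod μ₂).prod (μ₁.prod μ₂)) := hInt.sub hIntw
    have hi2 : Integrable (fun q : (X₁ × X₂) × (X₁ × X₂) =>
        K q.2 q.1 * φ₁ q.1.1 * φ₂ q.1.2 * θ₁ q.2.1 * θ₂ q.2.2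
          - K q.2 (q.1.1, w) * φ₁ q.1.1 * φ₂ q.1.2 * θ₁ q.2.1 * θ₂ q.2.2
          - K q.2 (z, q.1.2) * φ₁ q.1.1 * φ₂ q.1.2 * θ₁ q.2.1 * θ₂ q.2.2)
        ((μ₁.prod μ₂).prod (μ₁.prod μ₂)) := hi1.sub hIntz
    calc (∫ q : (X₁ × X₂) × (X₁ × X₂),
          (K q.2 q.1 - K q.2 (q.1.1, w) - K q.2 (z, q.1.2) + K q.2 (z, w))
            * (φ₁ q.1.1 * φ₂ q.1.2 * θ₁ q.2.1 * θ₂ q.2.2)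
          ∂((μ₁.prod μ₂).prod (μ₁.prod μ₂)))
        = ∫ q : (X₁ × X₂) × (X₁ × X₂),
            ((K q.2 q.1 * φ₁ q.1.1 * φ₂ q.1.2 * θ₁ q.2.1 * θ₂ q.2.2
              - K q.2 (q.1.1, w) * φ₁ q.1.1 * φ₂ q.1.2 * θ₁ q.2.1 * θ₂ q.2.2
              - K q.2 (z, q.1.2) * φ₁ q.1.1 * φ₂ q.1.2 * θ₁ q.2.1 * θ₂ q.2.2)
              + K q.2 (z, w) * φ₁ q.1.1 * φ₂ q.1.2 * θ₁ q.2.1 * θ₂ q.2.2)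
            ∂((μ₁.prod μ₂).prod (μ₁.prod μ₂)) :=
          integral_congr_ae (Filter.Eventually.of_forall e1)
      _ = (∫ q : (X₁ × X₂) × (X₁ × X₂),
            (K q.2 q.1 * φ₁ q.1.1 * φ₂ q.1.2 * θ₁ q.2.1 * θ₂ q.2.2
              - K q.2 (q.1.1, w) * φ₁ q.1.1 * φ₂ q.1.2 * θ₁ q.2.1 * θ₂ q.2.2
              - K q.2 (z, q.1.2) * φ₁ q.1.1 * φ₂ q.1.2 * θ₁ q.2.1 * θ₂ q.2.2)
            ∂((μ₁.prod μ₂).prod (μ₁.prod μ₂)))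
          + ∫ q : (X₁ × X₂) × (X₁ × X₂),
              K q.2 (z, w) * φ₁ q.1.1 * φ₂ q.1.2 * θ₁ q.2.1 * θ₂ q.2.2
              ∂((μ₁.prod μ₂).prod (μ₁.prod μ₂)) := integral_add hi2 hIntzw
      _ = ((∫ q : (X₁ × X₂) × (X₁ × X₂),
            (K q.2 q.1 * φ₁ q.1.1 * φ₂ q.1.2 * θ₁ q.2.1 * θ₂ q.2.2
              - K q.2 (q.1.1, w) * φ₁ q.1.1 * φ₂ q.1.2 * θ₁ q.2.1 * θ₂ q.2.2)
            ∂((μ₁.prod μ₂).prod (μ₁.prod μ₂)))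
          - ∫ q : (X₁ × X₂) × (X₁ × X₂),
              K q.2 (z, q.1.2) * φ₁ q.1.1 * φ₂ q.1.2 * θ₁ q.2.1 * θ₂ q.2.2
              ∂((μ₁.prod μ₂).prod (μ₁.prod μ₂)))
          + ∫ q : (X₁ × X₂) × (X₁ × X₂),
              K q.2 (z, w) * φ₁ q.1.1 * φ₂ q.1.2 * θ₁ q.2.1 * θ₂ q.2.2
              ∂((μ₁.prod μ₂).prod (μ₁.prod μ₂)) :=
          congrArg (fun t => t + ∫ q : (X₁ × X₂) × (X₁ × X₂),
              K q.2 (z, w) * φ₁ q.1.1 * φ₂ q.1.2 * θ₁ q.2.1 * θ₂ q.2.2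
              ∂((μ₁.prod μ₂).prod (μ₁.prod μ₂))) (integral_sub hi1 hIntz)
      _ = (((∫ q : (X₁ × X₂) × (X₁ × X₂),
            K q.2 q.1 * φ₁ q.1.1 * φ₂ q.1.2 * θ₁ q.2.1 * θ₂ q.2.2
            ∂((μ₁.prod μ₂).prod (μ₁.prod μ₂)))
          - ∫ q : (X₁ × X₂) × (X₁ × X₂),
              K q.2 (q.1.1, w) * φ₁ q.1.1 * φ₂ q.1.2 * θ₁ q.2.1 * θ₂ q.2.2
              ∂((μ₁.prod μ₂).prod (μ₁.prod μ₂)))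
          - ∫ q : (X₁ × X₂) × (X₁ × X₂),
              K q.2 (z, q.1.2) * φ₁ q.1.1 * φ₂ q.1.2 * θ₁ q.2.1 * θ₂ q.2.2
              ∂((μ₁.prod μ₂).prod (μ₁.prod μ₂)))
          + ∫ q : (X₁ × X₂) × (X₁ × X₂),
              K q.2 (z, w) * φ₁ q.1.1 * φ₂ q.1.2 * θ₁ q.2.1 * θ₂ q.2.2
              ∂((μ₁.prod μ₂).prod (μ₁.prod μ₂)) := by
          have h' := integral_sub hInt hIntw
          rw [show (∫ q : (X₁ × X₂) × (X₁ × X₂),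
            (K q.2 q.1 * φ₁ q.1.1 * φ₂ q.1.2 * θ₁ q.2.1 * θ₂ q.2.2
              - K q.2 (q.1.1, w) * φ₁ q.1.1 * φ₂ q.1.2 * θ₁ q.2.1 * θ₂ q.2.2)
            ∂((μ₁.prod μ₂).prod (μ₁.prod μ₂)))
            = (∫ q : (X₁ × X₂) × (X₁ × X₂),
            K q.2 q.1 * φ₁ q.1.1 * φ₂ q.1.2 * θ₁ q.2.1 * θ₂ q.2.2
            ∂((μ₁.prod μ₂).prod (μ₁.prod μ₂)))
          - ∫ q : (X₁ × X₂) × (X₁ × X₂),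
              K q.2 (q.1.1, w) * φ₁ q.1.1 * φ₂ q.1.2 * θ₁ q.2.1 * θ₂ q.2.2
              ∂((μ₁.prod μ₂).prod (μ₁.prod μ₂)) from h']
      _ = ∫ q : (X₁ × X₂) × (X₁ × X₂),
            K q.2 q.1 * φ₁ q.1.1 * φ₂ q.1.2 * θ₁ q.2.1 * θ₂ q.2.2
            ∂((μ₁.prod μ₂).prod (μ₁.prod μ₂)) := by
          rw [hw0, hz0, hzw0]
          ring
  rw [hQeq, ← hsplit]
  -- bound the norm of the integral by the lintegral of the norm
  have hstep : ENNReal.ofReal ‖∫ q : (X₁ × X₂) × (X₁ × X₂),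
        (K q.2 q.1 - K q.2 (q.1.1, w) - K q.2 (z, q.1.2) + K q.2 (z, w))
          * (φ₁ q.1.1 * φ₂ q.1.2 * θ₁ q.2.1 * θ₂ q.2.2)
        ∂((μ₁.prod μ₂).prod (μ₁.prod μ₂))‖
      ≤ ∫⁻ q : (X₁ × X₂) × (X₁ × X₂),
          (‖(K q.2 q.1 - K q.2 (q.1.1, w) - K q.2 (z, q.1.2) + K q.2 (z, w))
            * (φ₁ q.1.1 * φ₂ q.1.2 * θ₁ q.2.1 * θ₂ q.2.2)‖₊ : ℝ≥0∞)
          ∂((μ₁.prod μ₂).prod (μ₁.prod μ₂)) := by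
    rw [ofReal_norm]
    exact enorm_integral_le_lintegral_enorm _
  refine le_trans hstep ?_
  -- pointwise bound
  have hB : ∀ q : (X₁ × X₂) × (X₁ × X₂),
      (‖(K q.2 q.1 - K q.2 (q.1.1, w) - K q.2 (z, q.1.2) + K q.2 (z, w))
        * (φ₁ q.1.1 * φ₂ q.1.2 * θ₁ q.2.1 * θ₂ q.2.2)‖₊ : ℝ≥0∞)
      ≤ ENNReal.ofReal (C_H * d₁ ^ α₁ * d₂ ^ α₂)
          * ((‖φ₁ q.1.1‖₊ : ℝ≥0∞) * (‖φ₂ q.1.2‖₊ : ℝ≥0∞))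
          * (ENNReal.ofReal (ρ₁ q.2.1 z ^ (-α₁) * (lam₁ z (ρ₁ q.2.1 z))⁻¹ * ‖θ₁ q.2.1‖)
            * ENNReal.ofReal (ρ₂ q.2.2 w ^ (-α₂) * (lam₂ w (ρ₂ q.2.2 w))⁻¹ * ‖θ₂ q.2.2‖)) := by
    rintro ⟨⟨y₁, y₂⟩, x₁, x₂⟩
    dsimp only
    by_cases h1 : φ₁ y₁ = 0
    · simp [h1]
    by_cases h2 : φ₂ y₂ = 0
    · simp [h2]
    by_cases h3 : θ₁ x₁ = 0
    · simp [h3]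
    by_cases h4 : θ₂ x₂ = 0
    · simp [h4]
    have hx₁z : x₁ ≠ z := by
      intro h
      have : z ∈ Function.support φ₁ ∩ Function.support θ₁ := ⟨hz, by rw [← h] at *; exact h3⟩
      rw [hdisj₁] at this
      exact this
    have hx₂w : x₂ ≠ w := by
      intro h
      have : w ∈ Function.support φ₂ ∩ Function.support θ₂ := ⟨hw, by rw [← h] at *; exact h4⟩
      rw [hdisj₂] at this
      exact this
    have hρ₁pos : 0 < ρ₁ x₁ z :=
      (hρ₁_nonneg x₁ z).lt_of_ne (fun h0 => hx₁z ((hρ₁_eq x₁ z).mp h0.symm))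
    have hρ₂pos : 0 < ρ₂ x₂ w :=
      (hρ₂_nonneg x₂ w).lt_of_ne (fun h0 => hx₂w ((hρ₂_eq x₂ w).mp h0.symm))
    have hlam₁p : 0 < lam₁ z (ρ₁ x₁ z) := hlam₁_pos z _ hρ₁pos
    have hlam₂p : 0 < lam₂ w (ρ₂ x₂ w) := hlam₂_pos w _ hρ₂pos
    have hHo := hK_Holder x₁ x₂ y₁ y₂ z w (hsep₁ x₁ h3 y₁ h1 z hz) (hsep₂ x₂ h4 y₂ h2 w hw)
    have hr1 : ρ₁ y₁ z ^ α₁ / (ρ₁ x₁ z ^ α₁ * lam₁ z (ρ₁ x₁ z))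
        ≤ d₁ ^ α₁ * (ρ₁ x₁ z ^ (-α₁) * (lam₁ z (ρ₁ x₁ z))⁻¹) := by
      rw [Real.rpow_neg (hρ₁_nonneg x₁ z), div_eq_mul_inv, mul_inv]
      refine mul_le_mul_of_nonneg_right ?_
        (mul_nonneg (inv_nonneg.mpr (Real.rpow_nonneg (hρ₁_nonneg x₁ z) _))
          (inv_nonneg.mpr hlam₁p.le))
      exact Real.rpow_le_rpow (hρ₁_nonneg y₁ z) (hd₁.1 (Set.mem_image_of_mem _ h1)) hα₁.le
    have hr2 : ρ₂ y₂ w ^ α₂ / (ρ₂ x₂ w ^ α₂ * lam₂ w (ρ₂ x₂ w))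
        ≤ d₂ ^ α₂ * (ρ₂ x₂ w ^ (-α₂) * (lam₂ w (ρ₂ x₂ w))⁻¹) := by
      rw [Real.rpow_neg (hρ₂_nonneg x₂ w), div_eq_mul_inv, mul_inv]
      refine mul_le_mul_of_nonneg_right ?_
        (mul_nonneg (inv_nonneg.mpr (Real.rpow_nonneg (hρ₂_nonneg x₂ w) _))
          (inv_nonneg.mpr hlam₂p.le))
      exact Real.rpow_le_rpow (hρ₂_nonneg y₂ w) (hd₂.1 (Set.mem_image_of_mem _ h2)) hα₂.le
    have hE2 : 0 ≤ ρ₂ y₂ w ^ α₂ / (ρ₂ x₂ w ^ α₂ * lam₂ w (ρ₂ x₂ w)) :=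
      div_nonneg (Real.rpow_nonneg (hρ₂_nonneg _ _) _)
        (mul_nonneg (Real.rpow_nonneg (hρ₂_nonneg _ _) _) hlam₂p.le)
    have hu₁0 : 0 ≤ ρ₁ x₁ z ^ (-α₁) * (lam₁ z (ρ₁ x₁ z))⁻¹ :=
      mul_nonneg (Real.rpow_nonneg (hρ₁_nonneg _ _) _) (inv_nonneg.mpr hlam₁p.le)
    have hu₂0 : 0 ≤ ρ₂ x₂ w ^ (-α₂) * (lam₂ w (ρ₂ x₂ w))⁻¹ :=
      mul_nonneg (Real.rpow_nonneg (hρ₂_nonneg _ _) _) (inv_nonneg.mpr hlam₂p.le)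
    have hD : ‖K (x₁, x₂) (y₁, y₂) - K (x₁, x₂) (y₁, w) - K (x₁, x₂) (z, y₂) + K (x₁, x₂) (z, w)‖
        ≤ (C_H * (d₁ ^ α₁ * (ρ₁ x₁ z ^ (-α₁) * (lam₁ z (ρ₁ x₁ z))⁻¹)))
          * (d₂ ^ α₂ * (ρ₂ x₂ w ^ (-α₂) * (lam₂ w (ρ₂ x₂ w))⁻¹)) := by
      refine le_trans hHo ?_
      refine mul_le_mul (mul_le_mul_of_nonneg_left hr1 hC_H) hr2 hE2 ?_
      exact mul_nonneg hC_H (mul_nonneg (Real.rpow_nonneg hd₁0 _) hu₁0)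
    have hGnorm : ‖(K (x₁, x₂) (y₁, y₂) - K (x₁, x₂) (y₁, w) - K (x₁, x₂) (z, y₂)
          + K (x₁, x₂) (z, w)) * (φ₁ y₁ * φ₂ y₂ * θ₁ x₁ * θ₂ x₂)‖
        ≤ (C_H * d₁ ^ α₁ * d₂ ^ α₂) * ((‖φ₁ y₁‖ * ‖φ₂ y₂‖)
            * ((ρ₁ x₁ z ^ (-α₁) * (lam₁ z (ρ₁ x₁ z))⁻¹ * ‖θ₁ x₁‖)
              * (ρ₂ x₂ w ^ (-α₂) * (lam₂ w (ρ₂ x₂ w))⁻¹ * ‖θ₂ x₂‖))) := by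
      rw [norm_mul]
      refine le_trans (mul_le_mul_of_nonneg_right hD (norm_nonneg _)) (le_of_eq ?_)
      simp only [norm_mul]
      ring
    calc (‖(K (x₁, x₂) (y₁, y₂) - K (x₁, x₂) (y₁, w) - K (x₁, x₂) (z, y₂)
          + K (x₁, x₂) (z, w)) * (φ₁ y₁ * φ₂ y₂ * θ₁ x₁ * θ₂ x₂)‖₊ : ℝ≥0∞)
        = ENNReal.ofReal ‖(K (x₁, x₂) (y₁, y₂) - K (x₁, x₂) (y₁, w) - K (x₁, x₂) (z, y₂)
          + K (x₁, x₂) (z, w)) * (φ₁ y₁ * φ₂ y₂ * θ₁ x₁ * θ₂ x₂)‖ :=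
          (ofReal_norm _).symm
      _ ≤ ENNReal.ofReal ((C_H * d₁ ^ α₁ * d₂ ^ α₂) * ((‖φ₁ y₁‖ * ‖φ₂ y₂‖)
            * ((ρ₁ x₁ z ^ (-α₁) * (lam₁ z (ρ₁ x₁ z))⁻¹ * ‖θ₁ x₁‖)
              * (ρ₂ x₂ w ^ (-α₂) * (lam₂ w (ρ₂ x₂ w))⁻¹ * ‖θ₂ x₂‖)))) :=
          ENNReal.ofReal_le_ofReal hGnorm
      _ = ENNReal.ofReal (C_H * d₁ ^ α₁ * d₂ ^ α₂)
          * ((‖φ₁ y₁‖₊ : ℝ≥0∞) * (‖φ₂ y₂‖₊ : ℝ≥0∞))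
          * (ENNReal.ofReal (ρ₁ x₁ z ^ (-α₁) * (lam₁ z (ρ₁ x₁ z))⁻¹ * ‖θ₁ x₁‖)
            * ENNReal.ofReal (ρ₂ x₂ w ^ (-α₂) * (lam₂ w (ρ₂ x₂ w))⁻¹ * ‖θ₂ x₂‖)) := by
          rw [ENNReal.ofReal_mul (mul_nonneg (mul_nonneg hC_H (Real.rpow_nonneg hd₁0 _))
                (Real.rpow_nonneg hd₂0 _)),
            ENNReal.ofReal_mul (mul_nonneg (norm_nonneg _) (norm_nonneg _)),
            ENNReal.ofReal_mul (norm_nonneg _),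
            ENNReal.ofReal_mul (mul_nonneg hu₁0 (norm_nonneg _)),
            ofReal_norm, ofReal_norm]
          simp only [enorm_eq_nnnorm]
          ring
  refine le_trans (lintegral_mono hB) ?_
  -- now the purely quantitative estimate
  by_cases hc0 : ENNReal.ofReal (C_H * d₁ ^ α₁ * d₂ ^ α₂) = 0
  · simp only [hc0, zero_mul, lintegral_zero]
    exact zero_le
  by_cases hI₁0 : (∫⁻ x₁, ENNReal.ofReal (ρ₁ x₁ z ^ (-α₁) * (lam₁ z (ρ₁ x₁ z))⁻¹ * ‖θ₁ x₁‖) ∂μ₁) = 0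
  · have h0 := aux_coord21_zero μ₁ μ₂
      (fun x₁ => ENNReal.ofReal (ρ₁ x₁ z ^ (-α₁) * (lam₁ z (ρ₁ x₁ z))⁻¹ * ‖θ₁ x₁‖))
      (fun p => ENNReal.ofReal (C_H * d₁ ^ α₁ * d₂ ^ α₂)
        * ((‖φ₁ p.1.1‖₊ : ℝ≥0∞) * (‖φ₂ p.1.2‖₊ : ℝ≥0∞))
        * ENNReal.ofReal (ρ₂ p.2 w ^ (-α₂) * (lam₂ w (ρ₂ p.2 w))⁻¹ * ‖θ₂ p.2‖))
      hI₁0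
      (fun p => ENNReal.mul_ne_top
        (ENNReal.mul_ne_top ENNReal.ofReal_ne_top
          (ENNReal.mul_ne_top ENNReal.coe_ne_top ENNReal.coe_ne_top)) ENNReal.ofReal_ne_top)
    have hcongr : (∫⁻ q : (X₁ × X₂) × (X₁ × X₂),
        ENNReal.ofReal (C_H * d₁ ^ α₁ * d₂ ^ α₂)
          * ((‖φ₁ q.1.1‖₊ : ℝ≥0∞) * (‖φ₂ q.1.2‖₊ : ℝ≥0∞))
          * (ENNReal.ofReal (ρ₁ q.2.1 z ^ (-α₁) * (lam₁ z (ρ₁ q.2.1 z))⁻¹ * ‖θ₁ q.2.1‖)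
            * ENNReal.ofReal (ρ₂ q.2.2 w ^ (-α₂) * (lam₂ w (ρ₂ q.2.2 w))⁻¹ * ‖θ₂ q.2.2‖))
        ∂((μ₁.prod μ₂).prod (μ₁.prod μ₂))) = 0 := by
      rw [← h0]
      refine lintegral_congr fun q => ?_
      dsimp only
      ring
    rw [hcongr]
    exact zero_le
  by_cases hI₂0 : (∫⁻ x₂, ENNReal.ofReal (ρ₂ x₂ w ^ (-α₂) * (lam₂ w (ρ₂ x₂ w))⁻¹ * ‖θ₂ x₂‖) ∂μ₂) = 0
  · have h0 := aux_coord22_zero μ₁ μ₂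
      (fun x₂ => ENNReal.ofReal (ρ₂ x₂ w ^ (-α₂) * (lam₂ w (ρ₂ x₂ w))⁻¹ * ‖θ₂ x₂‖))
      (fun p => ENNReal.ofReal (C_H * d₁ ^ α₁ * d₂ ^ α₂)
        * ((‖φ₁ p.1.1‖₊ : ℝ≥0∞) * (‖φ₂ p.1.2‖₊ : ℝ≥0∞))
        * ENNReal.ofReal (ρ₁ p.2 z ^ (-α₁) * (lam₁ z (ρ₁ p.2 z))⁻¹ * ‖θ₁ p.2‖))
      hI₂0
      (fun p => ENNReal.mul_ne_top
        (ENNReal.mul_ne_top ENNReal.ofReal_ne_top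
          (ENNReal.mul_ne_top ENNReal.coe_ne_top ENNReal.coe_ne_top)) ENNReal.ofReal_ne_top)
    have hcongr : (∫⁻ q : (X₁ × X₂) × (X₁ × X₂),
        ENNReal.ofReal (C_H * d₁ ^ α₁ * d₂ ^ α₂)
          * ((‖φ₁ q.1.1‖₊ : ℝ≥0∞) * (‖φ₂ q.1.2‖₊ : ℝ≥0∞))
          * (ENNReal.ofReal (ρ₁ q.2.1 z ^ (-α₁) * (lam₁ z (ρ₁ q.2.1 z))⁻¹ * ‖θ₁ q.2.1‖)
            * ENNReal.ofReal (ρ₂ q.2.2 w ^ (-α₂) * (lam₂ w (ρ₂ q.2.2 w))⁻¹ * ‖θ₂ q.2.2‖))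
        ∂((μ₁.prod μ₂).prod (μ₁.prod μ₂))) = 0 := by
      rw [← h0]
      refine lintegral_congr fun q => ?_
      dsimp only
      ring
    rw [hcongr]
    exact zero_le
  -- nonzero RHS factors
  have hN₁ : eLpNorm φ₁ 2 μ₁ ≠ 0 := by
    intro h
    have hae := (eLpNorm_eq_zero_iff hφ₁.aestronglyMeasurable (by norm_num)).mp h
    rw [Filter.EventuallyEq, ae_iff] at hae
    simp only [Pi.zero_apply] at hae
    exact hsupp₁ hae
  have hN₂ : eLpNorm φ₂ 2 μ₂ ≠ 0 := by
    intro h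
    have hae := (eLpNorm_eq_zero_iff hφ₂.aestronglyMeasurable (by norm_num)).mp h
    rw [Filter.EventuallyEq, ae_iff] at hae
    simp only [Pi.zero_apply] at hae
    exact hsupp₂ hae
  have hM₁ : (μ₁ (Function.support φ₁)) ^ ((1 : ℝ) / 2) ≠ 0 := by
    intro h
    rcases ENNReal.rpow_eq_zero_iff.mp h with ⟨h0, _⟩ | ⟨_, hneg⟩
    · exact hsupp₁ h0
    · norm_num at hneg
  have hM₂ : (μ₂ (Function.support φ₂)) ^ ((1 : ℝ) / 2) ≠ 0 := by
    intro h
    rcases ENNReal.rpow_eq_zero_iff.mp h with ⟨h0, _⟩ | ⟨_, hneg⟩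
    · exact hsupp₂ h0
    · norm_num at hneg
  have hCS₁ : (∫⁻ a, (‖φ₁ a‖₊ : ℝ≥0∞) ∂μ₁)
      ≤ eLpNorm φ₁ 2 μ₁ * (μ₁ (Function.support φ₁)) ^ ((1 : ℝ) / 2) :=
    aux_cauchy_schwarz μ₁ φ₁ hφ₁.aestronglyMeasurable
  have hCS₂ : (∫⁻ b, (‖φ₂ b‖₊ : ℝ≥0∞) ∂μ₂)
      ≤ eLpNorm φ₂ 2 μ₂ * (μ₂ (Function.support φ₂)) ^ ((1 : ℝ) / 2) :=
    aux_cauchy_schwarz μ₂ φ₂ hφ₂.aestronglyMeasurable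
  -- infinite RHS cases
  by_cases hI₁top : (∫⁻ x₁, ENNReal.ofReal (ρ₁ x₁ z ^ (-α₁) * (lam₁ z (ρ₁ x₁ z))⁻¹ * ‖θ₁ x₁‖) ∂μ₁) = ⊤
  · rw [hI₁top, ENNReal.mul_top (mul_ne_zero (mul_ne_zero (mul_ne_zero (mul_ne_zero hc0 hN₁) hN₂) hM₁) hM₂),
      ENNReal.top_mul hI₂0]
    exact le_top
  by_cases hI₂top : (∫⁻ x₂, ENNReal.ofReal (ρ₂ x₂ w ^ (-α₂) * (lam₂ w (ρ₂ x₂ w))⁻¹ * ‖θ₂ x₂‖) ∂μ₂) = ⊤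
  · rw [hI₂top, ENNReal.mul_top (mul_ne_zero (mul_ne_zero (mul_ne_zero (mul_ne_zero (mul_ne_zero hc0 hN₁) hN₂) hM₁) hM₂) hI₁0)]
    exact le_top
  by_cases hL₁top : (∫⁻ a, (‖φ₁ a‖₊ : ℝ≥0∞) ∂μ₁) = ⊤
  · have htop : eLpNorm φ₁ 2 μ₁ * (μ₁ (Function.support φ₁)) ^ ((1 : ℝ) / 2) = ⊤ :=
      top_le_iff.mp (hL₁top ▸ hCS₁)
    have hre : ENNReal.ofReal (C_H * d₁ ^ α₁ * d₂ ^ α₂)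
          * eLpNorm φ₁ 2 μ₁ * eLpNorm φ₂ 2 μ₂
          * μ₁ (Function.support φ₁) ^ ((1 : ℝ) / 2)
          * μ₂ (Function.support φ₂) ^ ((1 : ℝ) / 2)
          * (∫⁻ x₁, ENNReal.ofReal (ρ₁ x₁ z ^ (-α₁) * (lam₁ z (ρ₁ x₁ z))⁻¹ * ‖θ₁ x₁‖) ∂μ₁)
          * (∫⁻ x₂, ENNReal.ofReal (ρ₂ x₂ w ^ (-α₂) * (lam₂ w (ρ₂ x₂ w))⁻¹ * ‖θ₂ x₂‖) ∂μ₂)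
        = (eLpNorm φ₁ 2 μ₁ * μ₁ (Function.support φ₁) ^ ((1 : ℝ) / 2))
          * (ENNReal.ofReal (C_H * d₁ ^ α₁ * d₂ ^ α₂) * eLpNorm φ₂ 2 μ₂
            * μ₂ (Function.support φ₂) ^ ((1 : ℝ) / 2)
            * (∫⁻ x₁, ENNReal.ofReal (ρ₁ x₁ z ^ (-α₁) * (lam₁ z (ρ₁ x₁ z))⁻¹ * ‖θ₁ x₁‖) ∂μ₁)
            * (∫⁻ x₂, ENNReal.ofReal (ρ₂ x₂ w ^ (-α₂) * (lam₂ w (ρ₂ x₂ w))⁻¹ * ‖θ₂ x₂‖) ∂μ₂)) := by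
      ring
    rw [hre, htop, ENNReal.top_mul (mul_ne_zero (mul_ne_zero (mul_ne_zero (mul_ne_zero hc0 hN₂) hM₂) hI₁0) hI₂0)]
    exact le_top
  by_cases hL₂top : (∫⁻ b, (‖φ₂ b‖₊ : ℝ≥0∞) ∂μ₂) = ⊤
  · have htop : eLpNorm φ₂ 2 μ₂ * (μ₂ (Function.support φ₂)) ^ ((1 : ℝ) / 2) = ⊤ :=
      top_le_iff.mp (hL₂top ▸ hCS₂)
    have hre : ENNReal.ofReal (C_H * d₁ ^ α₁ * d₂ ^ α₂)
          * eLpNorm φ₁ 2 μ₁ * eLpNorm φ₂ 2 μ₂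
          * μ₁ (Function.support φ₁) ^ ((1 : ℝ) / 2)
          * μ₂ (Function.support φ₂) ^ ((1 : ℝ) / 2)
          * (∫⁻ x₁, ENNReal.ofReal (ρ₁ x₁ z ^ (-α₁) * (lam₁ z (ρ₁ x₁ z))⁻¹ * ‖θ₁ x₁‖) ∂μ₁)
          * (∫⁻ x₂, ENNReal.ofReal (ρ₂ x₂ w ^ (-α₂) * (lam₂ w (ρ₂ x₂ w))⁻¹ * ‖θ₂ x₂‖) ∂μ₂)
        = (eLpNorm φ₂ 2 μ₂ * μ₂ (Function.support φ₂) ^ ((1 : ℝ) / 2))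
          * (ENNReal.ofReal (C_H * d₁ ^ α₁ * d₂ ^ α₂) * eLpNorm φ₁ 2 μ₁
            * μ₁ (Function.support φ₁) ^ ((1 : ℝ) / 2)
            * (∫⁻ x₁, ENNReal.ofReal (ρ₁ x₁ z ^ (-α₁) * (lam₁ z (ρ₁ x₁ z))⁻¹ * ‖θ₁ x₁‖) ∂μ₁)
            * (∫⁻ x₂, ENNReal.ofReal (ρ₂ x₂ w ^ (-α₂) * (lam₂ w (ρ₂ x₂ w))⁻¹ * ‖θ₂ x₂‖) ∂μ₂)) := by
      ring
    rw [hre, htop, ENNReal.top_mul (mul_ne_zero (mul_ne_zero (mul_ne_zero (mul_ne_zero hc0 hN₁) hM₁) hI₁0) hI₂0)]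
    exact le_top
  -- main case
  calc (∫⁻ q : (X₁ × X₂) × (X₁ × X₂),
        ENNReal.ofReal (C_H * d₁ ^ α₁ * d₂ ^ α₂)
          * ((‖φ₁ q.1.1‖₊ : ℝ≥0∞) * (‖φ₂ q.1.2‖₊ : ℝ≥0∞))
          * (ENNReal.ofReal (ρ₁ q.2.1 z ^ (-α₁) * (lam₁ z (ρ₁ q.2.1 z))⁻¹ * ‖θ₁ q.2.1‖)
            * ENNReal.ofReal (ρ₂ q.2.2 w ^ (-α₂) * (lam₂ w (ρ₂ q.2.2 w))⁻¹ * ‖θ₂ q.2.2‖))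
        ∂((μ₁.prod μ₂).prod (μ₁.prod μ₂)))
      = ENNReal.ofReal (C_H * d₁ ^ α₁ * d₂ ^ α₂)
        * ∫⁻ q : (X₁ × X₂) × (X₁ × X₂),
            ((‖φ₁ q.1.1‖₊ : ℝ≥0∞) * (‖φ₂ q.1.2‖₊ : ℝ≥0∞))
            * (ENNReal.ofReal (ρ₁ q.2.1 z ^ (-α₁) * (lam₁ z (ρ₁ q.2.1 z))⁻¹ * ‖θ₁ q.2.1‖)
              * ENNReal.ofReal (ρ₂ q.2.2 w ^ (-α₂) * (lam₂ w (ρ₂ q.2.2 w))⁻¹ * ‖θ₂ q.2.2‖))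
            ∂((μ₁.prod μ₂).prod (μ₁.prod μ₂)) := by
        rw [← lintegral_const_mul' _ _ ENNReal.ofReal_ne_top]
        exact lintegral_congr fun q => (mul_assoc _ _ _)
    _ ≤ ENNReal.ofReal (C_H * d₁ ^ α₁ * d₂ ^ α₂)
        * ((∫⁻ a, (‖φ₁ a‖₊ : ℝ≥0∞) ∂μ₁) * (∫⁻ b, (‖φ₂ b‖₊ : ℝ≥0∞) ∂μ₂)
          * ((∫⁻ x₁, ENNReal.ofReal (ρ₁ x₁ z ^ (-α₁) * (lam₁ z (ρ₁ x₁ z))⁻¹ * ‖θ₁ x₁‖) ∂μ₁)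
            * (∫⁻ x₂, ENNReal.ofReal (ρ₂ x₂ w ^ (-α₂) * (lam₂ w (ρ₂ x₂ w))⁻¹ * ‖θ₂ x₂‖) ∂μ₂))) := by
        refine mul_le_mul' le_rfl ?_
        exact aux_prod4_le μ₁ μ₂ _ _ _ _
          hφ₁.aestronglyMeasurable.enorm hφ₂.aestronglyMeasurable.enorm
          (fun a => ENNReal.coe_ne_top) (fun b => ENNReal.coe_ne_top)
          (fun a => ENNReal.ofReal_ne_top) hI₁top hI₂top
    _ ≤ ENNReal.ofReal (C_H * d₁ ^ α₁ * d₂ ^ α₂)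
        * ((eLpNorm φ₁ 2 μ₁ * (μ₁ (Function.support φ₁)) ^ ((1 : ℝ) / 2))
          * (eLpNorm φ₂ 2 μ₂ * (μ₂ (Function.support φ₂)) ^ ((1 : ℝ) / 2))
          * ((∫⁻ x₁, ENNReal.ofReal (ρ₁ x₁ z ^ (-α₁) * (lam₁ z (ρ₁ x₁ z))⁻¹ * ‖θ₁ x₁‖) ∂μ₁)
            * (∫⁻ x₂, ENNReal.ofReal (ρ₂ x₂ w ^ (-α₂) * (lam₂ w (ρ₂ x₂ w))⁻¹ * ‖θ₂ x₂‖) ∂μ₂))) := by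
        exact mul_le_mul' le_rfl (mul_le_mul' (mul_le_mul' hCS₁ hCS₂) le_rfl)
    _ = ENNReal.ofReal (C_H * d₁ ^ α₁ * d₂ ^ α₂)
          * eLpNorm φ₁ 2 μ₁ * eLpNorm φ₂ 2 μ₂
          * μ₁ (Function.support φ₁) ^ ((1 : ℝ) / 2)
          * μ₂ (Function.support φ₂) ^ ((1 : ℝ) / 2)
          * (∫⁻ x₁, ENNReal.ofReal (ρ₁ x₁ z ^ (-α₁) * (lam₁ z (ρ₁ x₁ z))⁻¹ * ‖θ₁ x₁‖) ∂μ₁)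
          * (∫⁻ x₂, ENNReal.ofReal (ρ₂ x₂ w ^ (-α₂) * (lam₂ w (ρ₂ x₂ w))⁻¹ * ‖θ₂ x₂‖) ∂μ₂) := by
        ring
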